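/- Fix integers L ≥ 1 and n ≥ 1, and let w^{(1)},…,w^{(K)} be words over the alphabet [L], each of length at most n, which are pairwise not cyclically equivalent. Then there exists N₀ such that for every N ≥ N₀ the polynomial functions p_{w^{(1)};N},…,p_{w^{(K)};N} are algebraically independent over ℂ in the ℂ-algebra of all functions (Mat(N,ℂ))^L → ℂ (with pointwise operations). -/

import Mathlib

noncomputable section

/-- The product `X_{w₁} ⋯ X_{w_n}` of matrices along a word `w`. -/
def wordProd (L N : ℕ) (X : Fin L → Matrix (Fin N) (Fin N) ℂ) (w : List (Fin L)) :
    Matrix (Fin N) (Fin N) ℂ :=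
  (w.map X).prod

/-- The trace-word polynomial function `p_{w;N}(X₁,…,X_L) = tr(X_{w₁} ⋯ X_{w_n})`. -/
def pW (L N : ℕ) (w : List (Fin L)) : (Fin L → Matrix (Fin N) (Fin N) ℂ) → ℂ :=
  fun X => (wordProd L N X w).trace

/-- The matrix-entry polynomial function `p_{ij;w;N}(X₁,…,X_L) = (X_{w₁} ⋯ X_{w_n})_{ij}`. -/
def pE (L N : ℕ) (w : List (Fin L)) (i j : Fin N) :
    (Fin L → Matrix (Fin N) (Fin N) ℂ) → ℂ :=
  fun X => wordProd L N X w i j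

section Stmt5Aux

open Matrix Finset

variable {L : ℕ}

/-- Generic word product over an arbitrary finite index type. -/
private def wpx {α : Type*} [Fintype α] [DecidableEq α]
    (X : Fin L → Matrix α α ℂ) (u : List (Fin L)) : Matrix α α ℂ :=
  (u.map X).prod

private lemma wpx_nil {α : Type*} [Fintype α] [DecidableEq α] (X : Fin L → Matrix α α ℂ) :
    wpx X [] = 1 := rfl

private lemma wpx_cons {α : Type*} [Fintype α] [DecidableEq α] (X : Fin L → Matrix α α ℂ)
    (a : Fin L) (u : List (Fin L)) :
    wpx X (a :: u) = X a * wpx X u := by simp [wpx]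

private lemma wpx_smul {α : Type*} [Fintype α] [DecidableEq α] (X : Fin L → Matrix α α ℂ)
    (z : ℂ) (u : List (Fin L)) :
    wpx (fun l => z • X l) u = z ^ u.length • wpx X u := by
  induction u with
  | nil => simp [wpx]
  | cons a u ih =>
      rw [wpx_cons, wpx_cons, ih, smul_mul_assoc, mul_smul_comm, smul_smul,
        List.length_cons, pow_succ]
      ring_nf

/-- The cyclic-shift matrices associated to a labelling `f` of `ZMod d`. -/
private def shiftM (d : ℕ) [NeZero d] (f : ZMod d → Fin L) (l : Fin L) :
    Matrix (ZMod d) (ZMod d) ℂ :=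
  Matrix.of fun i j => if f i = l ∧ j = i + 1 then 1 else 0

private lemma wpx_shiftM (d : ℕ) [NeZero d] (f : ZMod d → Fin L) (u : List (Fin L)) :
    ∀ i j : ZMod d, wpx (shiftM d f) u i j
      = if (∀ k : Fin u.length, f (i + ((k : ℕ) : ZMod d)) = u.get k)
            ∧ j = i + ((u.length : ℕ) : ZMod d) then 1 else 0 := by
  induction u with
  | nil =>
      intro i j
      rw [wpx_nil, Matrix.one_apply]
      simp [eq_comm]
  | cons a u ih =>
      intro i j
      rw [wpx_cons, Matrix.mul_apply]
      rw [Finset.sum_eq_single (i + 1)]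
      · have hs : shiftM d f a i (i + 1) = if f i = a then 1 else 0 := by
          simp [shiftM]
        rw [hs, ih (i + 1) j]
        by_cases hfa : f i = a
        · simp only [hfa, if_true, one_mul]
          apply if_congr _ rfl rfl
          constructor
          · rintro ⟨h1, h2⟩
            constructor
            · intro k
              refine Fin.cases ?_ ?_ k
              · simpa using hfa
              · intro k'
                have := h1 k'
                simpa [add_assoc, add_comm, add_left_comm] using this
            · rw [h2, List.length_cons]
              push_cast
              ring
          · rintro ⟨h1, h2⟩
            constructor
            · intro k'
              have := h1 k'.succ
              simpa [add_assoc, add_comm, add_left_comm] using this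
            · rw [h2, List.length_cons]
              push_cast
              ring
        · simp only [hfa, if_false, zero_mul]
          rw [if_neg]
          rintro ⟨h1, -⟩
          exact hfa (by simpa using h1 ⟨0, Nat.succ_pos _⟩)
      · intro q _ hq
        have : shiftM d f a i q = 0 := by simp [shiftM, hq]
        rw [this, zero_mul]
      · intro h
        exact absurd (Finset.mem_univ _) h


private lemma trace_wpx_shiftM_of_not_dvd (d : ℕ) [NeZero d] (f : ZMod d → Fin L)
    (u : List (Fin L)) (h : ¬ d ∣ u.length) :
    (wpx (shiftM d f) u).trace = 0 := by
  rw [Matrix.trace]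
  apply Finset.sum_eq_zero
  intro i _
  rw [Matrix.diag_apply, wpx_shiftM, if_neg]
  rintro ⟨-, h2⟩
  apply h
  rwa [left_eq_add, ZMod.natCast_eq_zero_iff] at h2

private lemma trace_wpx_shiftM_of_dvd (d : ℕ) [NeZero d] (f : ZMod d → Fin L)
    (u : List (Fin L)) (h : d ∣ u.length) :
    (wpx (shiftM d f) u).trace
      = ((Finset.univ.filter
          (fun i : ZMod d => ∀ k : Fin u.length, f (i + ((k : ℕ) : ZMod d)) = u.get k)).card : ℂ) := by
  have hz : ((u.length : ℕ) : ZMod d) = 0 := (ZMod.natCast_eq_zero_iff _ _).2 h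
  have step : (wpx (shiftM d f) u).trace
      = ∑ i : ZMod d,
        if (∀ k : Fin u.length, f (i + ((k : ℕ) : ZMod d)) = u.get k) then (1:ℂ) else 0 := by
    rw [Matrix.trace]
    refine Finset.sum_congr rfl (fun i _ => ?_)
    rw [Matrix.diag_apply, wpx_shiftM]
    apply if_congr _ rfl rfl
    simp [hz]
  rw [step, Finset.sum_boole]

private lemma trace_self_ne_zero (v : List (Fin L)) (hv : v.length ≠ 0) :
    haveI : NeZero v.length := ⟨hv⟩
    (wpx (shiftM v.length (fun i => v.get ⟨i.val, i.val_lt⟩)) v).trace ≠ 0 := by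
  haveI : NeZero v.length := ⟨hv⟩
  rw [trace_wpx_shiftM_of_dvd _ _ _ dvd_rfl]
  rw [Nat.cast_ne_zero]
  apply Finset.card_ne_zero_of_mem (a := 0)
  refine Finset.mem_filter.2 ⟨Finset.mem_univ _, ?_⟩
  intro k
  congr 1
  apply Fin.ext
  simp [ZMod.val_cast_of_lt k.isLt]

private lemma trace_eq_zero_of_not_rotated (v u : List (Fin L)) (hv : v.length ≠ 0)
    (hlen : v.length = u.length) (hrot : ¬ v.IsRotated u) :
    haveI : NeZero v.length := ⟨hv⟩
    (wpx (shiftM v.length (fun i => v.get ⟨i.val, i.val_lt⟩)) u).trace = 0 := by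
  haveI : NeZero v.length := ⟨hv⟩
  rw [trace_wpx_shiftM_of_dvd _ _ _ (hlen ▸ dvd_rfl)]
  rw [Nat.cast_eq_zero, Finset.card_eq_zero, Finset.filter_eq_empty_iff]
  intro i _
  intro hmatch
  apply hrot
  refine ⟨i.val, ?_⟩
  apply List.ext_get
  · rw [List.length_rotate, hlen]
  · intro k h1 h2
    rw [List.get_rotate]
    have hk : k < u.length := by simpa [hlen] using h2
    have hval : (i + ((k : ℕ) : ZMod v.length)).val = (k + i.val) % v.length := by
      rw [ZMod.val_add, ZMod.val_natCast]
      conv_rhs => rw [Nat.add_comm, Nat.add_mod, Nat.mod_eq_of_lt (ZMod.val_lt i)]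
    have := hmatch ⟨k, hk⟩
    rw [← this]
    congr 1
    exact Fin.ext hval.symm


section Blocks

variable {K N : ℕ} {dd : Fin K → ℕ} [∀ s, NeZero (dd s)]
variable (ι : (Σ s : Fin K, ZMod (dd s)) ↪ Fin N)

private lemma sigma_snd_eq {dd : Fin K → ℕ} {s : Fin K} {a b : ZMod (dd s)}
    (h : (⟨s, a⟩ : Σ s, ZMod (dd s)) = ⟨s, b⟩) : a = b := by
  have := (Sigma.mk.inj_iff.1 h).2
  exact eq_of_heq this

/-- Embedding of a small matrix as a block inside a big `N × N` matrix. -/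
private def FF (s : Fin K) (M : Matrix (ZMod (dd s)) (ZMod (dd s)) ℂ) :
    Matrix (Fin N) (Fin N) ℂ :=
  ∑ p : ZMod (dd s) × ZMod (dd s),
    M p.1 p.2 • Matrix.single (ι ⟨s, p.1⟩) (ι ⟨s, p.2⟩) (1 : ℂ)

private lemma stdB_mul (s s' : Fin K) (i j : ZMod (dd s)) (k l : ZMod (dd s')) :
    Matrix.single (ι ⟨s, i⟩) (ι ⟨s, j⟩) (1 : ℂ) *
      Matrix.single (ι ⟨s', k⟩) (ι ⟨s', l⟩) (1 : ℂ)
    = if (⟨s, j⟩ : Σ s, ZMod (dd s)) = ⟨s', k⟩ then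
        Matrix.single (ι ⟨s, i⟩) (ι ⟨s', l⟩) (1 : ℂ) else 0 := by
  by_cases h : (⟨s, j⟩ : Σ s, ZMod (dd s)) = ⟨s', k⟩
  · obtain ⟨hs, hjk⟩ := Sigma.mk.inj_iff.1 h
    subst hs
    have hjk' : j = k := eq_of_heq hjk
    subst hjk'
    rw [if_pos rfl, Matrix.single_mul_single_same, one_mul]
  · rw [if_neg h]
    apply Matrix.single_mul_single_of_ne
    exact fun he => h (ι.injective he)

private lemma FF_mul_ne {s s' : Fin K} (h : s ≠ s')
    (M : Matrix (ZMod (dd s)) (ZMod (dd s)) ℂ) (M' : Matrix (ZMod (dd s')) (ZMod (dd s')) ℂ) :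
    FF ι s M * FF ι s' M' = 0 := by
  rw [FF, FF, Finset.sum_mul_sum]
  apply Finset.sum_eq_zero
  intro p _
  apply Finset.sum_eq_zero
  intro q _
  rw [smul_mul_assoc, mul_smul_comm, stdB_mul,
    if_neg (fun he => h (congrArg Sigma.fst he)), smul_zero, smul_zero]

private lemma FF_mul_same (s : Fin K)
    (M M' : Matrix (ZMod (dd s)) (ZMod (dd s)) ℂ) :
    FF ι s M * FF ι s M' = FF ι s (M * M') := by
  calc FF ι s M * FF ι s M'
      = ∑ i : ZMod (dd s), ∑ j : ZMod (dd s), ∑ l : ZMod (dd s),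
          (M i j * M' j l) • Matrix.single (ι ⟨s, i⟩) (ι ⟨s, l⟩) (1:ℂ) := by
        rw [FF, FF, Finset.sum_mul_sum, Fintype.sum_prod_type]
        refine Finset.sum_congr rfl fun i _ => ?_
        refine Finset.sum_congr rfl fun j _ => ?_
        rw [Fintype.sum_prod_type]
        rw [Finset.sum_eq_single j]
        · refine Finset.sum_congr rfl fun l _ => ?_
          rw [smul_mul_assoc, mul_smul_comm, stdB_mul, if_pos rfl, smul_smul]
        · intro q1 _ hq1
          apply Finset.sum_eq_zero
          intro l _
          rw [smul_mul_assoc, mul_smul_comm, stdB_mul,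
            if_neg (fun he => hq1 (sigma_snd_eq he).symm), smul_zero, smul_zero]
        · intro hj; exact absurd (Finset.mem_univ _) hj
    _ = ∑ i : ZMod (dd s), ∑ l : ZMod (dd s), ∑ j : ZMod (dd s),
          (M i j * M' j l) • Matrix.single (ι ⟨s, i⟩) (ι ⟨s, l⟩) (1:ℂ) :=
        Finset.sum_congr rfl fun i _ => Finset.sum_comm
    _ = FF ι s (M * M') := by
        rw [FF, Fintype.sum_prod_type]
        refine Finset.sum_congr rfl fun i _ => Finset.sum_congr rfl fun l _ => ?_
        rw [Matrix.mul_apply, Finset.sum_smul]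

private lemma FF_trace (s : Fin K) (M : Matrix (ZMod (dd s)) (ZMod (dd s)) ℂ) :
    (FF ι s M).trace = M.trace := by
  rw [FF, Matrix.trace_sum]
  have key : ∀ p : ZMod (dd s) × ZMod (dd s),
      (M p.1 p.2 • Matrix.single (ι ⟨s, p.1⟩) (ι ⟨s, p.2⟩) (1:ℂ)).trace
        = if p.1 = p.2 then M p.1 p.2 else 0 := by
    intro p
    rw [Matrix.trace_smul, smul_eq_mul]
    by_cases h : p.1 = p.2
    · rw [if_pos h]
      have h2 : ι ⟨s, p.1⟩ = ι ⟨s, p.2⟩ := by rw [h]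
      rw [h2, Matrix.trace_single_eq_same, mul_one]
    · rw [if_neg h, Matrix.trace_single_eq_of_ne, mul_zero]
      intro he
      exact h (sigma_snd_eq (ι.injective he))
  rw [Finset.sum_congr rfl (fun p _ => key p), Matrix.trace, Fintype.sum_prod_type]
  refine Finset.sum_congr rfl fun i _ => ?_
  simp [Matrix.diag]

private lemma wpx_sum_FF
    (Z : (s : Fin K) → Fin L → Matrix (ZMod (dd s)) (ZMod (dd s)) ℂ)
    (u : List (Fin L)) (hu : u ≠ []) :
    wpx (fun l => ∑ s, FF ι s (Z s l)) u = ∑ s, FF ι s (wpx (Z s) u) := by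
  induction u with
  | nil => exact absurd rfl hu
  | cons a u ih =>
      rcases eq_or_ne u [] with rfl | hu'
      · simp only [wpx_cons, wpx_nil]
        simp [wpx]
      · rw [wpx_cons, ih hu', Finset.sum_mul_sum]
        refine Finset.sum_congr rfl fun s _ => ?_
        rw [Finset.sum_eq_single s]
        · rw [FF_mul_same, ← wpx_cons]
        · intro s' _ hs'
          exact FF_mul_ne ι (Ne.symm hs') _ _
        · intro hs; exact absurd (Finset.mem_univ _) hs

end Blocks

/-- Triangular systems with nonzero diagonal and positive exponents are surjective over `ℂ`. -/
private lemma triangular_surjective :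
    ∀ (K : ℕ) (c : Fin K → Fin K → ℂ) (d : Fin K → ℕ),
      (∀ t, d t ≠ 0) → (∀ t, c t t ≠ 0) → (∀ t s, s < t → c t s = 0) →
      ∀ y : Fin K → ℂ, ∃ lam : Fin K → ℂ, ∀ t, ∑ s, c t s * lam s ^ d t = y t := by
  intro K
  induction K with
  | zero => intro c d _ _ _ y; exact ⟨fun t => 0, fun t => t.elim0⟩
  | succ K ih =>
      intro c d hd hdiag htri y
      obtain ⟨z, hz⟩ := IsAlgClosed.exists_pow_nat_eq
        (y (Fin.last K) / c (Fin.last K) (Fin.last K))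
        (Nat.pos_of_ne_zero (hd (Fin.last K)))
      obtain ⟨lam', hlam'⟩ := ih
        (fun t s => c t.castSucc s.castSucc) (fun t => d t.castSucc)
        (fun t => hd _) (fun t => hdiag _)
        (fun t s hst => htri _ _ (by simpa using hst))
        (fun t => y t.castSucc - c t.castSucc (Fin.last K) * z ^ d t.castSucc)
      refine ⟨Fin.snoc lam' z, fun t => ?_⟩
      rw [Fin.sum_univ_castSucc]
      refine Fin.lastCases ?_ ?_ t
      · have hzero : ∀ s : Fin K,
            c (Fin.last K) s.castSucc * (Fin.snoc lam' z : Fin (K+1) → ℂ) s.castSucc ^ d (Fin.last K) = 0 := by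
          intro s
          rw [htri _ _ (Fin.castSucc_lt_last s), zero_mul]
        rw [Finset.sum_eq_zero (fun s _ => hzero s), zero_add, Fin.snoc_last, hz]
        field_simp
        rw [mul_comm, mul_div_assoc, div_self (hdiag _), mul_one]
      · intro t0
        have hsum : ∀ s : Fin K,
            c t0.castSucc s.castSucc * (Fin.snoc lam' z : Fin (K+1) → ℂ) s.castSucc ^ d t0.castSucc
              = c t0.castSucc s.castSucc * lam' s ^ d t0.castSucc := by
          intro s; rw [Fin.snoc_castSucc]
        rw [Finset.sum_congr rfl (fun s _ => hsum s), hlam' t0, Fin.snoc_last]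
        ring

end Stmt5Aux

private theorem stmt5_sorted (L K : ℕ)
    (w : Fin K → List (Fin L))
    (hne : ∀ t, w t ≠ [])
    (hcyc : ∀ t t', t ≠ t' → ¬ (w t).IsRotated (w t'))
    (hsorted : ∀ s t : Fin K, s ≤ t → (w t).length ≤ (w s).length) :
    ∃ N₀ : ℕ, ∀ N : ℕ, N₀ ≤ N →
      AlgebraicIndependent ℂ (fun t : Fin K => pW L N (w t)) := by
  classical
  haveI hNZ : ∀ s : Fin K, NeZero ((w s).length) :=
    fun s => ⟨by simpa [List.length_eq_zero_iff] using hne s⟩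
  set dd : Fin K → ℕ := fun s => (w s).length with hdd
  set c : Fin K → Fin K → ℂ := fun t s =>
    (wpx (shiftM (dd s) (fun i => (w s).get ⟨i.val, i.val_lt⟩)) (w t)).trace with hc
  have hdiag : ∀ t, c t t ≠ 0 := fun t => trace_self_ne_zero (w t) (hNZ t).out
  have htri : ∀ t s, s < t → c t s = 0 := by
    intro t s hst
    rcases eq_or_ne (dd s) (dd t) with he | hne'
    · exact trace_eq_zero_of_not_rotated (w s) (w t) (hNZ s).out he
        (fun hr => hcyc s t (ne_of_lt hst) hr)
    · apply trace_wpx_shiftM_of_not_dvd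
      intro hdvd
      have h1 : dd s ≤ dd t := Nat.le_of_dvd (Nat.pos_of_ne_zero (hNZ t).out) hdvd
      have h2 : dd t ≤ dd s := hsorted s t (le_of_lt hst)
      exact hne' (le_antisymm h1 h2)
  refine ⟨∑ s, dd s, fun N hN => ?_⟩
  obtain ⟨ι⟩ : Nonempty ((Σ s : Fin K, ZMod (dd s)) ↪ Fin N) := by
    apply Function.Embedding.nonempty_of_card_le
    rw [Fintype.card_sigma, Fintype.card_fin]
    calc (∑ s, Fintype.card (ZMod (dd s))) = ∑ s, dd s := by
          refine Finset.sum_congr rfl fun s _ => ?_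
          exact ZMod.card (dd s)
      _ ≤ N := hN
  set XX : (Fin K → ℂ) → Fin L → Matrix (Fin N) (Fin N) ℂ := fun lam l =>
    ∑ s, FF ι s (lam s • shiftM (dd s) (fun i => (w s).get ⟨i.val, i.val_lt⟩) l) with hXX
  have hval : ∀ (lam : Fin K → ℂ) (t : Fin K),
      pW L N (w t) (XX lam) = ∑ s, c t s * lam s ^ dd t := by
    intro lam t
    have h0 : pW L N (w t) (XX lam) = (wpx (XX lam) (w t)).trace := rfl
    have h1 : XX lam = fun l => ∑ s, FF ι s
        ((fun l' => lam s • shiftM (dd s) (fun i => (w s).get ⟨i.val, i.val_lt⟩) l') l) := rfl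
    rw [h0, h1, wpx_sum_FF ι _ _ (hne t), Matrix.trace_sum]
    refine Finset.sum_congr rfl fun s _ => ?_
    rw [FF_trace, wpx_smul, Matrix.trace_smul, smul_eq_mul]
    rw [hc]
    ring
  rw [algebraicIndependent_iff_injective_aeval, injective_iff_map_eq_zero]
  intro p hp
  apply MvPolynomial.funext
  intro y
  rw [map_zero]
  obtain ⟨lam, hlam⟩ := triangular_surjective K c dd (fun t => (hNZ t).out) hdiag htri y
  have h0 := congrFun hp (XX lam)
  rw [Pi.zero_apply] at h0
  have h1 : (MvPolynomial.aeval (fun t : Fin K => pW L N (w t)) p) (XX lam)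
      = MvPolynomial.eval (fun t => pW L N (w t) (XX lam)) p := by
    calc (MvPolynomial.aeval (fun t : Fin K => pW L N (w t)) p) (XX lam)
        = (Pi.evalAlgHom ℂ (fun _ : (Fin L → Matrix (Fin N) (Fin N) ℂ) => ℂ) (XX lam))
            ((MvPolynomial.aeval (fun t : Fin K => pW L N (w t))) p) := rfl
      _ = (MvPolynomial.aeval (fun t : Fin K => pW L N (w t) (XX lam))) p :=
          DFunLike.congr_fun (MvPolynomial.comp_aeval
            (f := fun t : Fin K => pW L N (w t))
            (φ := Pi.evalAlgHom ℂ (fun _ : (Fin L → Matrix (Fin N) (Fin N) ℂ) => ℂ) (XX lam))) p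
      _ = MvPolynomial.eval (fun t => pW L N (w t) (XX lam)) p := by
          rw [← MvPolynomial.coe_aeval_eq_eval]
          rfl
  have h4 : (fun t => pW L N (w t) (XX lam)) = y := funext fun t => by
    rw [hval lam t]; exact hlam t
  rw [h1, h4] at h0
  exact h0


/-- Fix `L ≥ 1` and `n ≥ 1`, and let `w⁽¹⁾,…,w⁽ᴷ⁾` be nonempty words
over the alphabet `[L]`, each of length at most `n`, pairwise not cyclically equivalent.
Then there exists `N₀` such that for every `N ≥ N₀` the polynomial functions
`p_{w⁽¹⁾;N},…,p_{w⁽ᴷ⁾;N}` are algebraically independent over `ℂ` in the `ℂ`-algebra of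
all functions `(Mat(N,ℂ))^L → ℂ`. -/
theorem stmt5 (L n K : ℕ) (hL : 1 ≤ L) (hn : 1 ≤ n)
    (w : Fin K → List (Fin L))
    (hne : ∀ t, w t ≠ [])
    (hlen : ∀ t, (w t).length ≤ n)
    (hcyc : ∀ t t', t ≠ t' → ¬ (w t).IsRotated (w t')) :
    ∃ N₀ : ℕ, ∀ N : ℕ, N₀ ≤ N →
      AlgebraicIndependent ℂ (fun t : Fin K => pW L N (w t)) := by

  set σ : Equiv.Perm (Fin K) := Tuple.sort (fun t => n - (w t).length) with hσ
  have hsorted : ∀ s t : Fin K, s ≤ t → (w (σ t)).length ≤ (w (σ s)).length := by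
    intro s t hst
    have hm := Tuple.monotone_sort (fun t => n - (w t).length) hst
    simp only [Function.comp_apply] at hm
    rw [← hσ] at hm
    have h1 := hlen (σ s)
    have h2 := hlen (σ t)
    omega
  obtain ⟨N₀, hind⟩ := stmt5_sorted L K (fun t => w (σ t))
    (fun t => hne _) (fun t t' htt => hcyc _ _ (fun he => htt (σ.injective he))) hsorted
  refine ⟨N₀, fun N hN => ?_⟩
  have h := (hind N hN).comp σ.symm σ.symm.injective
  have he : ((fun t : Fin K => pW L N (w (σ t))) ∘ σ.symm) = fun t : Fin K => pW L N (w t) := by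
    funext t
    simp
  rwa [he] at h
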